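/- Let I be an interval, b : I → ℝ continuous, and let W = W(s,ψ) > 0 be C¹ in s and C⁴ in ψ on an open subset of I×(0,∞), satisfying ∂_sW - 2b·W + (3b/2)·ψ·∂_ψW - √W·∂_ψ²W = -2. Then the function F := √W·∂_ψ²W - 2 satisfies ∂_sF - (1/(2W))·F·(F+2) + (3b/2)·ψ·∂_ψF - √W·∂_ψ²F = 0 on the same set. -/

import Mathlib

open Set MeasureTheory Filter
open scoped Topology

noncomputable def pd1 (g : ℝ × ℝ → ℝ) (x : ℝ × ℝ) : ℝ := fderiv ℝ g x (1, 0)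
noncomputable def pd2 (g : ℝ × ℝ → ℝ) (x : ℝ × ℝ) : ℝ := fderiv ℝ g x (0, 1)

lemma hasDerivAt_slice1 {g : ℝ × ℝ → ℝ} {x : ℝ × ℝ} (hg : DifferentiableAt ℝ g x) :
    HasDerivAt (fun σ => g (σ, x.2)) (pd1 g x) x.1 := by
  have hc : HasDerivAt (fun σ : ℝ => (σ, x.2)) ((1 : ℝ), (0 : ℝ)) x.1 :=
    HasDerivAt.prodMk (hasDerivAt_id x.1) (hasDerivAt_const x.1 x.2)
  exact hg.hasFDerivAt.comp_hasDerivAt_of_eq _ hc (by simp)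

lemma hasDerivAt_slice2 {g : ℝ × ℝ → ℝ} {x : ℝ × ℝ} (hg : DifferentiableAt ℝ g x) :
    HasDerivAt (fun t => g (x.1, t)) (pd2 g x) x.2 := by
  have hc : HasDerivAt (fun t : ℝ => (x.1, t)) ((0 : ℝ), (1 : ℝ)) x.2 :=
    HasDerivAt.prodMk (hasDerivAt_const x.2 x.1) (hasDerivAt_id x.2)
  exact hg.hasFDerivAt.comp_hasDerivAt_of_eq _ hc (by simp)

lemma pd_contDiffOn {g : ℝ × ℝ → ℝ} {Ω : Set (ℝ × ℝ)} {n : ℕ} (v : ℝ × ℝ)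
    (hg : ContDiffOn ℝ (n + 1 : ℕ) g Ω) (hΩ : IsOpen Ω) :
    ContDiffOn ℝ n (fun x => fderiv ℝ g x v) Ω :=
  (hg.fderiv_of_isOpen hΩ (by exact_mod_cast le_rfl)).clm_apply contDiffOn_const

lemma pd_comm {g : ℝ × ℝ → ℝ} {x : ℝ × ℝ} (hg : ContDiffAt ℝ 2 g x) :
    pd1 (pd2 g) x = pd2 (pd1 g) x := by
  have hd : DifferentiableAt ℝ (fderiv ℝ g) x :=
    (hg.fderiv_right (m := 1) (by norm_num)).differentiableAt (by norm_num)
  have key : ∀ v : ℝ × ℝ, HasFDerivAt (fun y => fderiv ℝ g y v)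
      ((ContinuousLinearMap.apply ℝ ℝ v).comp (fderiv ℝ (fderiv ℝ g) x)) x :=
    fun v => (ContinuousLinearMap.apply ℝ ℝ v).hasFDerivAt.comp x hd.hasFDerivAt
  have h1 : pd1 (pd2 g) x = fderiv ℝ (fderiv ℝ g) x (1, 0) (0, 1) := by
    show fderiv ℝ (fun y => fderiv ℝ g y (0, 1)) x (1, 0) = _
    rw [(key (0, 1)).fderiv]; rfl
  have h2 : pd2 (pd1 g) x = fderiv ℝ (fderiv ℝ g) x (0, 1) (1, 0) := by
    show fderiv ℝ (fun y => fderiv ℝ g y (1, 0)) x (0, 1) = _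
    rw [(key (1, 0)).fderiv]; rfl
  rw [h1, h2, hg.isSymmSndFDerivAt (by simp)]


/-- `F = √W·∂_ψ²W - 2`, the quantity corresponding to `2(∂_Y²U - 1)` in von Mises
variables. -/
noncomputable def Fvm (W : ℝ → ℝ → ℝ) (s psi : ℝ) : ℝ :=
  Real.sqrt (W s psi) * iteratedDeriv 2 (W s) psi - 2

/-- If `W` solves the von Mises form of the rescaled Prandtl equation, then
`F = √W·∂_ψ²W - 2` solves `∂_sF - F(F+2)/(2W) + (3b/2)ψ∂_ψF - √W·∂_ψ²F = 0`. -/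
theorem F_equation
    (I : Set ℝ) (hI : I.OrdConnected) (b : ℝ → ℝ) (hb : ContinuousOn b I)
    (Omega : Set (ℝ × ℝ)) (hOpen : IsOpen Omega) (hSub : Omega ⊆ I ×ˢ Ioi 0)
    (W : ℝ → ℝ → ℝ)
    (hWpos : ∀ p ∈ Omega, 0 < W p.1 p.2)
    (hWreg : ContDiffOn ℝ 5 (Function.uncurry W) Omega)
    (heq : ∀ p ∈ Omega,
      deriv (fun σ => W σ p.2) p.1 - 2 * b p.1 * W p.1 p.2
        + 3 * b p.1 / 2 * p.2 * deriv (W p.1) p.2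
        - Real.sqrt (W p.1 p.2) * iteratedDeriv 2 (W p.1) p.2 = -2) :
    ∀ p ∈ Omega,
      deriv (fun σ => Fvm W σ p.2) p.1
        - 1 / (2 * W p.1 p.2) * Fvm W p.1 p.2 * (Fvm W p.1 p.2 + 2)
        + 3 * b p.1 / 2 * p.2 * deriv (Fvm W p.1) p.2
        - Real.sqrt (W p.1 p.2) * iteratedDeriv 2 (Fvm W p.1) p.2 = 0 := by
  classical
  set f : ℝ × ℝ → ℝ := Function.uncurry W with hfdef
  set f1 := pd1 f
  set f2 := pd2 f
  set f22 := pd2 f2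
  set f222 := pd2 f22
  set f2222 := pd2 f222
  set f12 := pd2 f1
  set f122 := pd2 f12
  -- regularity
  have h5 : ContDiffOn ℝ ((4 : ℕ) + 1 : ℕ) f Omega := by exact_mod_cast hWreg
  have hf1 : ContDiffOn ℝ (4 : ℕ) f1 Omega := pd_contDiffOn _ h5 hOpen
  have hf2 : ContDiffOn ℝ (4 : ℕ) f2 Omega := pd_contDiffOn _ h5 hOpen
  have hf22 : ContDiffOn ℝ (3 : ℕ) f22 Omega := pd_contDiffOn _ hf2 hOpen
  have hf222 : ContDiffOn ℝ (2 : ℕ) f222 Omega := pd_contDiffOn _ hf22 hOpen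
  have hf2222 : ContDiffOn ℝ (1 : ℕ) f2222 Omega := pd_contDiffOn _ hf222 hOpen
  have hf12 : ContDiffOn ℝ (3 : ℕ) f12 Omega := pd_contDiffOn _ hf1 hOpen
  have hf122 : ContDiffOn ℝ (2 : ℕ) f122 Omega := pd_contDiffOn _ hf12 hOpen
  -- differentiability at points
  have diffAt : ∀ {g : ℝ × ℝ → ℝ} {n : ℕ}, ContDiffOn ℝ (n : ℕ) g Omega → 1 ≤ n →
      ∀ x ∈ Omega, DifferentiableAt ℝ g x := by
    intro g n hg hn x hx
    exact (hg.contDiffAt (hOpen.mem_nhds hx)).differentiableAt (by exact_mod_cast (show n ≠ 0 by omega))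
  have df : ∀ x ∈ Omega, DifferentiableAt ℝ f x :=
    diffAt (h5.of_le (by exact_mod_cast Nat.le_refl 5)) (by norm_num)
  have df1 : ∀ x ∈ Omega, DifferentiableAt ℝ f1 x := diffAt hf1 (by norm_num)
  have df2 : ∀ x ∈ Omega, DifferentiableAt ℝ f2 x := diffAt hf2 (by norm_num)
  have df22 : ∀ x ∈ Omega, DifferentiableAt ℝ f22 x := diffAt hf22 (by norm_num)
  have df222 : ∀ x ∈ Omega, DifferentiableAt ℝ f222 x := diffAt hf222 (by norm_num)
  have df12 : ∀ x ∈ Omega, DifferentiableAt ℝ f12 x := diffAt hf12 (by norm_num)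
  -- positivity
  have hpos : ∀ x ∈ Omega, 0 < f x := fun x hx => hWpos x hx
  have hne : ∀ x ∈ Omega, f x ≠ 0 := fun x hx => (hpos x hx).ne'
  have hsq : ∀ x ∈ Omega, (0:ℝ) < Real.sqrt (f x) := fun x hx => Real.sqrt_pos.2 (hpos x hx)
  -- eventual membership
  have hmem2 : ∀ x ∈ Omega, ∀ᶠ t in 𝓝 x.2, (x.1, t) ∈ Omega := by
    intro x hx
    have : ContinuousAt (fun t : ℝ => (x.1, t)) x.2 :=
      (continuous_const.prodMk continuous_id).continuousAt
    exact this.eventually_mem (by simpa using hOpen.mem_nhds hx)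
  have hmem1 : ∀ x ∈ Omega, ∀ᶠ σ in 𝓝 x.1, (σ, x.2) ∈ Omega := by
    intro x hx
    have : ContinuousAt (fun σ : ℝ => (σ, x.2)) x.1 :=
      (continuous_id.prodMk continuous_const).continuousAt
    exact this.eventually_mem (by simpa using hOpen.mem_nhds hx)
  -- basic slice identities
  have H1 : ∀ x ∈ Omega, deriv (W x.1) x.2 = f2 x := by
    intro x hx
    exact (hasDerivAt_slice2 (df x hx)).deriv
  have H2 : ∀ x ∈ Omega, iteratedDeriv 2 (W x.1) x.2 = f22 x := by
    intro x hx
    have e1 : deriv (W x.1) =ᶠ[𝓝 x.2] fun t => f2 (x.1, t) := by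
      filter_upwards [hmem2 x hx] with t ht using H1 (x.1, t) ht
    have : iteratedDeriv 2 (W x.1) x.2 = deriv (deriv (W x.1)) x.2 := by
      rw [show (2:ℕ) = 1 + 1 from rfl, iteratedDeriv_succ, iteratedDeriv_one]
    rw [this, e1.deriv_eq]
    exact (hasDerivAt_slice2 (df2 x hx)).deriv
  have H3 : ∀ x ∈ Omega, Fvm W x.1 x.2 = Real.sqrt (f x) * f22 x - 2 := by
    intro x hx
    unfold Fvm
    rw [H2 x hx]
    rfl
  have H0 : ∀ x ∈ Omega, deriv (fun σ => W σ x.2) x.1 = f1 x := by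
    intro x hx
    exact (hasDerivAt_slice1 (df x hx)).deriv
  -- the PDE in terms of f
  have PDE0 : ∀ x ∈ Omega,
      f1 x - 2 * b x.1 * f x + 3 * b x.1 / 2 * x.2 * f2 x
        - Real.sqrt (f x) * f22 x = -2 := by
    intro x hx
    have := heq x hx
    rwa [H0 x hx, H1 x hx, H2 x hx] at this
  -- slice HasDerivAt facts
  have D : ∀ (g : ℝ × ℝ → ℝ), (∀ x ∈ Omega, DifferentiableAt ℝ g x) → ∀ x ∈ Omega,
      HasDerivAt (fun t => g (x.1, t)) (pd2 g x) x.2 :=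
    fun g hg x hx => hasDerivAt_slice2 (hg x hx)
  -- first psi-derivative of the PDE
  have PDE1 : ∀ x ∈ Omega,
      f12 x - 2 * b x.1 * f2 x + (3 * b x.1 / 2) * (1 * f2 x + x.2 * f22 x)
        - (f2 x / (2 * Real.sqrt (f x)) * f22 x + Real.sqrt (f x) * f222 x) = 0 := by
    intro x hx
    have hD : HasDerivAt
        (fun t => f1 (x.1, t) - 2 * b x.1 * f (x.1, t)
          + 3 * b x.1 / 2 * t * f2 (x.1, t)
          - Real.sqrt (f (x.1, t)) * f22 (x.1, t))
        (f12 x - 2 * b x.1 * f2 x + (3 * b x.1 / 2) * (1 * f2 x + x.2 * f22 x)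
          - (f2 x / (2 * Real.sqrt (f x)) * f22 x + Real.sqrt (f x) * f222 x)) x.2 := by
      have t1 := D f1 df1 x hx
      have t2 := (D f df x hx).const_mul (2 * b x.1)
      have t3 : HasDerivAt (fun t => 3 * b x.1 / 2 * t * f2 (x.1, t))
          ((3 * b x.1 / 2) * (1 * f2 x + x.2 * f22 x)) x.2 := by
        have := ((hasDerivAt_id x.2).mul (D f2 df2 x hx)).const_mul (3 * b x.1 / 2)
        simpa [mul_assoc] using this
      have t4 : HasDerivAt (fun t => Real.sqrt (f (x.1, t)) * f22 (x.1, t))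
          (f2 x / (2 * Real.sqrt (f x)) * f22 x + Real.sqrt (f x) * f222 x) x.2 := by
        have hs := (D f df x hx).sqrt (by simpa using hne x hx)
        have := hs.mul (D f22 df22 x hx)
        exact this
      exact ((t1.sub t2).add t3).sub t4
    have hC : HasDerivAt
        (fun t => f1 (x.1, t) - 2 * b x.1 * f (x.1, t)
          + 3 * b x.1 / 2 * t * f2 (x.1, t)
          - Real.sqrt (f (x.1, t)) * f22 (x.1, t)) 0 x.2 := by
      refine (hasDerivAt_const x.2 (-2 : ℝ)).congr_of_eventuallyEq ?_
      filter_upwards [hmem2 x hx] with t ht using PDE0 (x.1, t) ht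
    exact hD.unique hC
  -- second psi-derivative of the PDE
  have PDE2 : ∀ x ∈ Omega,
      f122 x - 2 * b x.1 * f22 x
        + (3 * b x.1 / 2) * (1 * f22 x + (1 * f22 x + x.2 * f222 x))
        - ((f22 x * (2 * Real.sqrt (f x)) - f2 x * (2 * (f2 x / (2 * Real.sqrt (f x)))))
              / (2 * Real.sqrt (f x)) ^ 2 * f22 x
            + f2 x / (2 * Real.sqrt (f x)) * f222 x
            + (f2 x / (2 * Real.sqrt (f x)) * f222 x + Real.sqrt (f x) * f2222 x)) = 0 := by
    intro x hx
    have hden : (2 : ℝ) * Real.sqrt (f x) ≠ 0 := mul_ne_zero two_ne_zero (hsq x hx).ne'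
    have hu : HasDerivAt (fun t => f2 (x.1, t) / (2 * Real.sqrt (f (x.1, t))))
        ((f22 x * (2 * Real.sqrt (f x)) - f2 x * (2 * (f2 x / (2 * Real.sqrt (f x)))))
          / (2 * Real.sqrt (f x)) ^ 2) x.2 := by
      have hd : HasDerivAt (fun t => 2 * Real.sqrt (f (x.1, t)))
          (2 * (f2 x / (2 * Real.sqrt (f x)))) x.2 := by
        have := ((D f df x hx).sqrt (by simpa using hne x hx)).const_mul 2
        simpa using this
      have := (D f2 df2 x hx).div hd (by simpa using hden)
      exact this
    have hD : HasDerivAt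
        (fun t => f12 (x.1, t) - 2 * b x.1 * f2 (x.1, t)
          + (3 * b x.1 / 2) * (1 * f2 (x.1, t) + t * f22 (x.1, t))
          - (f2 (x.1, t) / (2 * Real.sqrt (f (x.1, t))) * f22 (x.1, t)
              + Real.sqrt (f (x.1, t)) * f222 (x.1, t)))
        (f122 x - 2 * b x.1 * f22 x
          + (3 * b x.1 / 2) * (1 * f22 x + (1 * f22 x + x.2 * f222 x))
          - ((f22 x * (2 * Real.sqrt (f x)) - f2 x * (2 * (f2 x / (2 * Real.sqrt (f x)))))
                / (2 * Real.sqrt (f x)) ^ 2 * f22 x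
              + f2 x / (2 * Real.sqrt (f x)) * f222 x
              + (f2 x / (2 * Real.sqrt (f x)) * f222 x + Real.sqrt (f x) * f2222 x))) x.2 := by
      have t1 := D f12 df12 x hx
      have t2 := (D f2 df2 x hx).const_mul (2 * b x.1)
      have t3 : HasDerivAt (fun t => (3 * b x.1 / 2) * (1 * f2 (x.1, t) + t * f22 (x.1, t)))
          ((3 * b x.1 / 2) * (1 * f22 x + (1 * f22 x + x.2 * f222 x))) x.2 := by
        have inner := ((D f2 df2 x hx).const_mul 1).add ((hasDerivAt_id x.2).mul (D f22 df22 x hx))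
        exact inner.const_mul (3 * b x.1 / 2)
      have t4a : HasDerivAt
          (fun t => f2 (x.1, t) / (2 * Real.sqrt (f (x.1, t))) * f22 (x.1, t))
          ((f22 x * (2 * Real.sqrt (f x)) - f2 x * (2 * (f2 x / (2 * Real.sqrt (f x)))))
              / (2 * Real.sqrt (f x)) ^ 2 * f22 x
            + f2 x / (2 * Real.sqrt (f x)) * f222 x) x.2 := by
        have := hu.mul (D f22 df22 x hx)
        exact this
      have t4b : HasDerivAt (fun t => Real.sqrt (f (x.1, t)) * f222 (x.1, t))
          (f2 x / (2 * Real.sqrt (f x)) * f222 x + Real.sqrt (f x) * f2222 x) x.2 := by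
        have := ((D f df x hx).sqrt (by simpa using hne x hx)).mul (D f222 df222 x hx)
        exact this
      exact ((t1.sub t2).add t3).sub (t4a.add t4b)
    have hC : HasDerivAt
        (fun t => f12 (x.1, t) - 2 * b x.1 * f2 (x.1, t)
          + (3 * b x.1 / 2) * (1 * f2 (x.1, t) + t * f22 (x.1, t))
          - (f2 (x.1, t) / (2 * Real.sqrt (f (x.1, t))) * f22 (x.1, t)
              + Real.sqrt (f (x.1, t)) * f222 (x.1, t))) 0 x.2 := by
      refine (hasDerivAt_const x.2 (0 : ℝ)).congr_of_eventuallyEq ?_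
      filter_upwards [hmem2 x hx] with t ht using PDE1 (x.1, t) ht
    exact hD.unique hC
  -- symmetry of mixed partials
  have SY1 : ∀ x ∈ Omega, f12 x = pd1 f2 x := by
    intro x hx
    have hc : ContDiffAt ℝ 2 f x :=
      (hWreg.contDiffAt (hOpen.mem_nhds hx)).of_le (by norm_num)
    exact (pd_comm hc).symm
  intro p hp
  have SY2 : f122 p = pd1 f22 p := by
    have e1 : f12 =ᶠ[𝓝 p] pd1 f2 := by
      filter_upwards [hOpen.mem_nhds hp] with x hx using SY1 x hx
    have hc2 : ContDiffAt ℝ 2 f2 p :=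
      (hf2.contDiffAt (hOpen.mem_nhds hp)).of_le (by exact_mod_cast Nat.le_of_lt (by norm_num))
    calc f122 p = pd2 (pd1 f2) p := by
          show fderiv ℝ f12 p (0,1) = fderiv ℝ (pd1 f2) p (0,1)
          rw [e1.fderiv_eq]
      _ = pd1 f22 p := (pd_comm hc2).symm
  -- s-derivative of Fvm
  have GS : deriv (fun σ => Fvm W σ p.2) p.1
      = f1 p / (2 * Real.sqrt (f p)) * f22 p + Real.sqrt (f p) * pd1 f22 p := by
    have e : (fun σ => Fvm W σ p.2) =ᶠ[𝓝 p.1]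
        fun σ => Real.sqrt (f (σ, p.2)) * f22 (σ, p.2) - 2 := by
      filter_upwards [hmem1 p hp] with σ hσ using H3 (σ, p.2) hσ
    have h : HasDerivAt (fun σ => Real.sqrt (f (σ, p.2)) * f22 (σ, p.2) - 2)
        (f1 p / (2 * Real.sqrt (f p)) * f22 p + Real.sqrt (f p) * pd1 f22 p) p.1 := by
      have hs := (hasDerivAt_slice1 (df p hp)).sqrt (by simpa using hne p hp)
      have := (hs.mul (hasDerivAt_slice1 (df22 p hp))).sub_const 2
      simpa using this
    rw [e.deriv_eq]
    exact h.deriv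
  -- psi-derivative of Fvm
  have GP : ∀ x ∈ Omega, deriv (Fvm W x.1) x.2
      = f2 x / (2 * Real.sqrt (f x)) * f22 x + Real.sqrt (f x) * f222 x := by
    intro x hx
    have e : Fvm W x.1 =ᶠ[𝓝 x.2]
        fun t => Real.sqrt (f (x.1, t)) * f22 (x.1, t) - 2 := by
      filter_upwards [hmem2 x hx] with t ht using H3 (x.1, t) ht
    have h : HasDerivAt (fun t => Real.sqrt (f (x.1, t)) * f22 (x.1, t) - 2)
        (f2 x / (2 * Real.sqrt (f x)) * f22 x + Real.sqrt (f x) * f222 x) x.2 := by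
      have hs := (D f df x hx).sqrt (by simpa using hne x hx)
      have := (hs.mul (D f22 df22 x hx)).sub_const 2
      simpa using this
    rw [e.deriv_eq]
    exact h.deriv
  -- second psi-derivative of Fvm
  have GPP : iteratedDeriv 2 (Fvm W p.1) p.2
      = (f22 p * (2 * Real.sqrt (f p)) - f2 p * (2 * (f2 p / (2 * Real.sqrt (f p)))))
            / (2 * Real.sqrt (f p)) ^ 2 * f22 p
          + f2 p / (2 * Real.sqrt (f p)) * f222 p
          + (f2 p / (2 * Real.sqrt (f p)) * f222 p + Real.sqrt (f p) * f2222 p) := by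
    have hden : (2 : ℝ) * Real.sqrt (f p) ≠ 0 := mul_ne_zero two_ne_zero (hsq p hp).ne'
    have e : deriv (Fvm W p.1) =ᶠ[𝓝 p.2]
        fun t => f2 (p.1, t) / (2 * Real.sqrt (f (p.1, t))) * f22 (p.1, t)
          + Real.sqrt (f (p.1, t)) * f222 (p.1, t) := by
      filter_upwards [hmem2 p hp] with t ht using GP (p.1, t) ht
    have hit : iteratedDeriv 2 (Fvm W p.1) p.2 = deriv (deriv (Fvm W p.1)) p.2 := by
      rw [show (2:ℕ) = 1 + 1 from rfl, iteratedDeriv_succ, iteratedDeriv_one]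
    have hu : HasDerivAt (fun t => f2 (p.1, t) / (2 * Real.sqrt (f (p.1, t))))
        ((f22 p * (2 * Real.sqrt (f p)) - f2 p * (2 * (f2 p / (2 * Real.sqrt (f p)))))
          / (2 * Real.sqrt (f p)) ^ 2) p.2 := by
      have hd : HasDerivAt (fun t => 2 * Real.sqrt (f (p.1, t)))
          (2 * (f2 p / (2 * Real.sqrt (f p)))) p.2 := by
        have := ((D f df p hp).sqrt (by simpa using hne p hp)).const_mul 2
        simpa using this
      have := (D f2 df2 p hp).div hd (by simpa using hden)
      exact this
    have t4a : HasDerivAt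
        (fun t => f2 (p.1, t) / (2 * Real.sqrt (f (p.1, t))) * f22 (p.1, t))
        ((f22 p * (2 * Real.sqrt (f p)) - f2 p * (2 * (f2 p / (2 * Real.sqrt (f p)))))
            / (2 * Real.sqrt (f p)) ^ 2 * f22 p
          + f2 p / (2 * Real.sqrt (f p)) * f222 p) p.2 := by
      have := hu.mul (D f22 df22 p hp)
      exact this
    have t4b : HasDerivAt (fun t => Real.sqrt (f (p.1, t)) * f222 (p.1, t))
        (f2 p / (2 * Real.sqrt (f p)) * f222 p + Real.sqrt (f p) * f2222 p) p.2 := by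
      have := ((D f df p hp).sqrt (by simpa using hne p hp)).mul (D f222 df222 p hp)
      exact this
    rw [hit, e.deriv_eq]
    exact (t4a.add t4b).deriv
  -- final algebra
  have hq : Real.sqrt (f p) * Real.sqrt (f p) = f p :=
    Real.mul_self_sqrt (hpos p hp).le
  have hqne : Real.sqrt (f p) ≠ 0 := (hsq p hp).ne'
  have hAne : f p ≠ 0 := hne p hp
  have E0 := PDE0 p hp
  have E2 := PDE2 p hp
  have hWf : W p.1 p.2 = f p := rfl
  rw [hWf, GS, GP p hp, GPP, H3 p hp, SY2.symm]
  set q := Real.sqrt (f p)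
  set A := f p
  set B := f2 p
  set C := f22 p
  set D3 := f222 p
  set D4 := f2222 p
  set P := f1 p
  set R := f122 p
  set β := b p.1
  set ψ := p.2
  rw [← hq] at E0 ⊢
  have hqq : q * q⁻¹ = 1 := mul_inv_cancel₀ hqne
  linear_combination (C / (2 * q)) * E0 + q * E2
    + (-(1/2) * C ^ 2 * (q * q⁻¹) + q⁻¹ * C + q * C * β) * hqq
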